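/- Let U be the group of units of R. If U ∩ (R − k) is nonempty and (R − k)^l = R − k for an integer l ≥ 1, then U = U^l, k = k^l, and R = R^l. -/

import Mathlib

theorem powers_surjective_of_unit_outside_base
    (k R : Type*) [Field k] [CommRing R] [IsDomain R] [IsNoetherianRing R]
    [Infinite R] [Algebra k R] [IsIntegrallyClosed R]
    (hinj : Function.Injective (algebraMap k R))
    (hic : ∀ x : R, IsIntegral k x → x ∈ Set.range (algebraMap k R))
    (horb : ∃ s : Finset R, ∀ x : R, x ∉ Set.range (algebraMap k R) →
      ∃ y ∈ s, ∃ σ : R ≃ₐ[k] R, σ y = x)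
    (l : ℕ) (hl : 1 ≤ l)
    (hu : ∃ u : Rˣ, (u : R) ∉ Set.range (algebraMap k R))
    (hpow : (fun x : R => x ^ l) '' {x : R | x ∉ Set.range (algebraMap k R)} =
      {x : R | x ∉ Set.range (algebraMap k R)}) :
    (∀ u : Rˣ, ∃ v : Rˣ, v ^ l = u) ∧
    (∀ a : k, ∃ b : k, b ^ l = a) ∧
    (∀ x : R, ∃ y : R, y ^ l = x) := by
  obtain ⟨u, hu⟩ := hu
  have hl0 : l ≠ 0 := by omega
  have hfwd : ∀ x : R, x ∉ Set.range (algebraMap k R) → x ^ l ∉ Set.range (algebraMap k R) := by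
    intro x hx
    have : x ^ l ∈ (fun x : R => x ^ l) '' {x : R | x ∉ Set.range (algebraMap k R)} :=
      Set.mem_image_of_mem _ hx
    rw [hpow] at this
    exact this
  have hsurj : ∀ x : R, x ∉ Set.range (algebraMap k R) →
      ∃ y : R, y ∉ Set.range (algebraMap k R) ∧ y ^ l = x := by
    intro x hx
    have : x ∈ (fun x : R => x ^ l) '' {x : R | x ∉ Set.range (algebraMap k R)} := by
      rw [hpow]; exact hx
    obtain ⟨y, hy, hyl⟩ := this
    exact ⟨y, hy, hyl⟩
  -- Key: every element of k has an l-th root in k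
  have hk : ∀ a : k, ∃ b : k, b ^ l = a := by
    intro a
    rcases eq_or_ne a 0 with rfl | ha
    · exact ⟨0, by simp [zero_pow hl0]⟩
    · have hul : ((u : R)) ^ l ∉ Set.range (algebraMap k R) := hfwd _ hu
      have hx : algebraMap k R a * (u : R) ^ l ∉ Set.range (algebraMap k R) := by
        rintro ⟨c, hc⟩
        apply hul
        refine ⟨a⁻¹ * c, ?_⟩
        rw [map_mul, hc, ← mul_assoc, ← map_mul, inv_mul_cancel₀ ha, map_one, one_mul]
      obtain ⟨y, -, hyl⟩ := hsurj _ hx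
      set z : R := y * ↑u⁻¹ with hz
      have hzl : z ^ l = algebraMap k R a := by
        rw [hz, mul_pow, hyl, mul_assoc, ← mul_pow, Units.mul_inv, one_pow, mul_one]
      have hint : IsIntegral k z := by
        have : IsIntegral k (z ^ l) := hzl ▸ isIntegral_algebraMap
        exact IsIntegral.of_pow (by omega) this
      obtain ⟨b, hb⟩ := hic z hint
      refine ⟨b, hinj ?_⟩
      rw [map_pow, hb, hzl]
  refine ⟨?_, hk, ?_⟩
  · intro w
    by_cases hw : (w : R) ∈ Set.range (algebraMap k R)
    · obtain ⟨a, ha⟩ := hw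
      obtain ⟨b, hb⟩ := hk a
      have hbl : algebraMap k R b ^ l = (w : R) := by rw [← map_pow, hb, ha]
      have hunit : IsUnit (algebraMap k R b) := by
        apply IsUnit.of_mul_eq_one (algebraMap k R b ^ (l - 1) * ↑w⁻¹)
        rw [← mul_assoc]
        have : algebraMap k R b * algebraMap k R b ^ (l - 1) = algebraMap k R b ^ l := by
          rw [← pow_succ']
          congr 1
          omega
        rw [this, hbl, Units.mul_inv]
      refine ⟨hunit.unit, Units.ext ?_⟩
      simp [hbl]
    · obtain ⟨y, -, hyl⟩ := hsurj _ hw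
      have hunit : IsUnit y := by
        apply IsUnit.of_mul_eq_one (y ^ (l - 1) * ↑w⁻¹)
        rw [← mul_assoc]
        have : y * y ^ (l - 1) = y ^ l := by
          rw [← pow_succ']
          congr 1
          omega
        rw [this, hyl, Units.mul_inv]
      refine ⟨hunit.unit, Units.ext ?_⟩
      simp [hyl]
  · intro x
    by_cases hx : x ∈ Set.range (algebraMap k R)
    · obtain ⟨a, ha⟩ := hx
      obtain ⟨b, hb⟩ := hk a
      exact ⟨algebraMap k R b, by rw [← map_pow, hb, ha]⟩
    · obtain ⟨y, -, hyl⟩ := hsurj _ hx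
      exact ⟨y, hyl⟩
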